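/- Let M be a finite rank-4 loopless hypermodular matroid that is non-modular, and let F and L be disjoint flats of M of rank 3 and rank 2 respectively. Then the number of rank-3 flats of M containing L is at least 3. -/

import Mathlib

open Set Matroid
open scoped Matroid

namespace SMC

variable {α : Type*}

/-- The rank of a set `X` in a matroid `M`: the maximum cardinality of an
independent subset of `X` (intended for finite matroids). -/
noncomputable def rk (M : Matroid α) (X : Set α) : ℕ :=
  sSup {n | ∃ I, M.Indep I ∧ I ⊆ X ∧ I.ncard = n}

/-- The rank of a matroid: the rank of its ground set. -/
noncomputable def rkM (M : Matroid α) : ℕ := rk M M.E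

/-- The modular defect of a pair of sets:
`r(X) + r(Y) - r(X ∪ Y) - r(X ∩ Y)` (a natural number). -/
noncomputable def pairDefect (M : Matroid α) (X Y : Set α) : ℕ :=
  rk M X + rk M Y - rk M (X ∪ Y) - rk M (X ∩ Y)

/-- A pair of sets is a modular pair if its modular defect is zero. -/
def ModularPair (M : Matroid α) (X Y : Set α) : Prop := pairDefect M X Y = 0

/-- A matroid is modular if every pair of flats is a modular pair. -/
def Modular (M : Matroid α) : Prop :=
  ∀ F L : Set α, M.IsFlat F → M.IsFlat L → ModularPair M F L

/-- A matroid (of rank at least 3) is hypermodular if every pair of flats of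
rank `r(M) - 1` is a modular pair. -/
def Hypermodular (M : Matroid α) : Prop :=
  ∀ F L : Set α, M.IsFlat F → M.IsFlat L →
    rk M F + 1 = rkM M → rk M L + 1 = rkM M → ModularPair M F L

/-- A modular cut of `M`: a collection of flats that is upward closed and
closed under intersections of modular pairs. -/
def ModularCut (M : Matroid α) (𝓜 : Set (Set α)) : Prop :=
  (∀ F ∈ 𝓜, M.IsFlat F) ∧
  (∀ L ∈ 𝓜, ∀ F : Set α, M.IsFlat F → L ⊆ F → F ∈ 𝓜) ∧
  (∀ F ∈ 𝓜, ∀ L ∈ 𝓜, ModularPair M F L → F ∩ L ∈ 𝓜)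

/-- A principal modular cut: the collection of all flats containing some fixed flat. -/
def PrincipalCut (M : Matroid α) (𝓜 : Set (Set α)) : Prop :=
  ∃ F : Set α, M.IsFlat F ∧ 𝓜 = {L | M.IsFlat L ∧ F ⊆ L}

/-- The modular cut generated by a collection `S` of flats:
the smallest modular cut containing `S`. -/
def genCut (M : Matroid α) (S : Set (Set α)) : Set (Set α) :=
  ⋂₀ {𝓜 | ModularCut M 𝓜 ∧ S ⊆ 𝓜}

/-- A Vámos line arrangement in a rank-4 matroid: four pairwise disjoint rank-2
flats, the union of any three of which has rank 4, with `r(T₀ ∪ T₁) = 3`,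
`r(Tᵢ ∪ Lⱼ) = 3` for all `i, j`, and `r(L₀ ∪ L₁) = 4`. -/
def VamosQuad (M : Matroid α) (T₀ T₁ L₀ L₁ : Set α) : Prop :=
  M.IsFlat T₀ ∧ M.IsFlat T₁ ∧ M.IsFlat L₀ ∧ M.IsFlat L₁ ∧
  rk M T₀ = 2 ∧ rk M T₁ = 2 ∧ rk M L₀ = 2 ∧ rk M L₁ = 2 ∧
  Disjoint T₀ T₁ ∧ Disjoint T₀ L₀ ∧ Disjoint T₀ L₁ ∧
  Disjoint T₁ L₀ ∧ Disjoint T₁ L₁ ∧ Disjoint L₀ L₁ ∧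
  rk M (T₀ ∪ T₁ ∪ L₀) = 4 ∧ rk M (T₀ ∪ T₁ ∪ L₁) = 4 ∧
  rk M (T₀ ∪ L₀ ∪ L₁) = 4 ∧ rk M (T₁ ∪ L₀ ∪ L₁) = 4 ∧
  rk M (T₀ ∪ T₁) = 3 ∧
  rk M (T₀ ∪ L₀) = 3 ∧ rk M (T₀ ∪ L₁) = 3 ∧
  rk M (T₁ ∪ L₀) = 3 ∧ rk M (T₁ ∪ L₁) = 3 ∧
  rk M (L₀ ∪ L₁) = 4

/-- The modular defect of a matroid: the sum of the modular defects of all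
unordered pairs of flats (the sum over ordered pairs is twice this). -/
noncomputable def matroidDefect (M : Matroid α) : ℕ :=
  (∑ᶠ F ∈ {F | M.IsFlat F}, ∑ᶠ L ∈ {L | M.IsFlat L}, pairDefect M F L) / 2


section Helpers

variable {M : Matroid α} {X Y I J : Set α} {e : α}

lemma closure_flat' (M : Matroid α) (X : Set α) : M.IsFlat (M.closure X) := by
  rw [Matroid.closure_def]
  have hne : Nonempty {F // M.IsFlat F ∧ X ∩ M.E ⊆ F} :=
    ⟨⟨M.E, M.ground_isFlat, inter_subset_right⟩⟩
  have h := Matroid.IsFlat.iInter (M := M)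
    (Fs := fun F : {F // M.IsFlat F ∧ X ∩ M.E ⊆ F} => F.1) (fun F => F.2.1)
  convert h using 1
  rw [sInter_eq_iInter]
  rfl

lemma flat_inter (hA : M.IsFlat X) (hB : M.IsFlat Y) : M.IsFlat (X ∩ Y) := by
  have h := Matroid.IsFlat.iInter (M := M) (Fs := fun b : Bool => bif b then X else Y)
    (by rintro (_ | _) <;> simpa)
  convert h using 1
  ext x
  simp [Bool.forall_bool, and_comm]

lemma rk_bddAbove (M : Matroid α) (hfin : M.E.Finite) (X : Set α) :
    BddAbove {n | ∃ I, M.Indep I ∧ I ⊆ X ∧ I.ncard = n} :=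
  ⟨M.E.ncard, by rintro n ⟨I, hI, -, rfl⟩; exact Set.ncard_le_ncard hI.subset_ground hfin⟩

lemma le_rk (hfin : M.E.Finite) (hI : M.Indep I) (hIX : I ⊆ X) : I.ncard ≤ rk M X :=
  le_csSup (rk_bddAbove M hfin X) ⟨I, hI, hIX, rfl⟩

lemma rk_le {n : ℕ} {X : Set α} (h : ∀ I, M.Indep I → I ⊆ X → I.ncard ≤ n) : rk M X ≤ n :=
  csSup_le ⟨0, ∅, M.empty_indep, empty_subset X, by simp⟩
    (by rintro m ⟨I, hI, hIX, rfl⟩; exact h I hI hIX)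

lemma Basis'.rk_eq (hfin : M.E.Finite) (hI : M.IsBasis' I X) : rk M X = I.ncard := by
  refine le_antisymm (rk_le fun J hJ hJX => ?_) (le_rk hfin hI.indep hI.subset)
  obtain ⟨J', hJ', hJJ'⟩ := hJ.subset_isBasis'_of_subset hJX
  have hcard : J'.encard = I.encard := hJ'.encard_eq_encard hI
  have h1 : J.ncard ≤ J'.ncard :=
    Set.ncard_le_ncard hJJ' (hfin.subset hJ'.indep.subset_ground)
  have h2 : J'.ncard = I.ncard := by rw [Set.ncard_def, hcard, ← Set.ncard_def]
  omega

lemma rk_indep (hfin : M.E.Finite) (hI : M.Indep I) : rk M I = I.ncard :=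
  Basis'.rk_eq hfin hI.isBasis_self.isBasis'

lemma rk_mono (hfin : M.E.Finite) (h : X ⊆ Y) : rk M X ≤ rk M Y :=
  rk_le fun I hI hIX => le_rk hfin hI (hIX.trans h)

lemma rk_closure_eq (hfin : M.E.Finite) (X : Set α) : rk M (M.closure X) = rk M X := by
  obtain ⟨I, hI⟩ := M.exists_isBasis' X
  rw [Basis'.rk_eq hfin hI, Basis'.rk_eq hfin hI.isBasis_closure_right.isBasis']

lemma rk_le_of_subset_closure (hfin : M.E.Finite) (h : X ⊆ M.closure Y) :
    rk M X ≤ rk M Y := by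
  have h2 := rk_mono hfin h
  rwa [rk_closure_eq hfin] at h2

lemma rk_insert_le (hfin : M.E.Finite) : rk M (insert e X) ≤ rk M X + 1 := by
  refine rk_le fun I hI hIX => ?_
  have hfinI : I.Finite := hfin.subset hI.subset_ground
  have h1 : I ⊆ insert e (I \ {e}) := by
    intro x hx
    by_cases hxe : x = e <;> simp [hxe, hx]
  have hsub : I \ {e} ⊆ X := by
    rintro x ⟨hxI, hxe⟩
    rcases hIX hxI with h | h
    · exact absurd h hxe
    · exact h
  calc I.ncard ≤ (insert e (I \ {e})).ncard :=
        Set.ncard_le_ncard h1 (hfinI.diff.insert e)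
    _ ≤ (I \ {e}).ncard + 1 := Set.ncard_insert_le _ _
    _ ≤ rk M X + 1 := by
        have := le_rk hfin (hI.subset diff_subset) hsub
        omega

lemma rk_insert_of_not_mem_closure (hfin : M.E.Finite) (heE : e ∈ M.E)
    (he : e ∉ M.closure X) : rk M (insert e X) = rk M X + 1 := by
  refine le_antisymm (rk_insert_le hfin) ?_
  obtain ⟨I, hI⟩ := M.exists_isBasis' X
  have hcl : M.closure I = M.closure X := hI.closure_eq_closure
  have heI : e ∉ I := fun h =>
    he (hcl ▸ M.subset_closure I hI.indep.subset_ground h)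
  have hind : M.Indep (insert e I) := by
    rw [hI.indep.insert_indep_iff]
    exact Or.inl ⟨heE, fun h => he (hcl ▸ h)⟩
  have hle := le_rk hfin hind (insert_subset_insert hI.subset)
  rwa [Set.ncard_insert_of_notMem heI (hfin.subset hI.indep.subset_ground),
    ← Basis'.rk_eq hfin hI] at hle

lemma subset_closure_of_rk_le (hfin : M.E.Finite) (hXY : X ⊆ Y) (hYE : Y ⊆ M.E)
    (h : rk M Y ≤ rk M X) : Y ⊆ M.closure X := by
  intro y hy
  by_contra hycl
  have h1 := rk_insert_of_not_mem_closure hfin (hYE hy) hycl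
  have h2 : rk M (insert y X) ≤ rk M Y := rk_mono hfin (insert_subset hy hXY)
  omega

lemma flat_eq_of_subset_of_rk_le (hfin : M.E.Finite) (hX : M.IsFlat X) (hY : M.IsFlat Y)
    (hXY : X ⊆ Y) (h : rk M Y ≤ rk M X) : X = Y :=
  hXY.antisymm (hX.closure ▸ subset_closure_of_rk_le hfin hXY hY.subset_ground h)

lemma indep_singleton_of_loopless (hloopless : M.closure ∅ = ∅) (heE : e ∈ M.E) :
    M.Indep {e} := by
  have h := M.empty_indep.insert_indep_iff (e := e)
  rw [hloopless] at h
  rw [show ({e} : Set α) = insert e ∅ by simp, h]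
  exact Or.inl ⟨heE, notMem_empty e⟩

lemma rk_singleton_of_loopless (hfin : M.E.Finite) (hloopless : M.closure ∅ = ∅)
    (heE : e ∈ M.E) : rk M {e} = 1 := by
  rw [rk_indep hfin (indep_singleton_of_loopless hloopless heE), Set.ncard_singleton]

lemma exists_indep_pair_of_rk_two (hfin : M.E.Finite) (h : rk M X = 2) :
    ∃ a b, a ∈ X ∧ b ∈ X ∧ M.Indep {a, b} ∧ a ≠ b := by
  obtain ⟨I, hI⟩ := M.exists_isBasis' X
  have hc : I.ncard = 2 := by rw [← Basis'.rk_eq hfin hI, h]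
  obtain ⟨a, b, hab, rfl⟩ := Set.ncard_eq_two.mp hc
  exact ⟨a, b, hI.subset (by simp), hI.subset (by simp), hI.indep, hab⟩

lemma plane_inter (hfin : M.E.Finite) (hrk : rkM M = 4) (hhm : Hypermodular M)
    {A B : Set α} (hA : M.IsFlat A) (hB : M.IsFlat B) (hrA : rk M A = 3) (hrB : rk M B = 3)
    (hAB : A ≠ B) : rk M (A ∩ B) = 2 := by
  have hE4 : rk M M.E = 4 := hrk
  have hABle : rk M (A ∪ B) ≤ 4 := by
    have := rk_mono hfin (union_subset hA.subset_ground hB.subset_ground)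
    omega
  have hUnionNe : ¬ rk M (A ∪ B) ≤ 3 := by
    intro hle
    have hsub : A ∪ B ⊆ M.closure A :=
      subset_closure_of_rk_le hfin subset_union_left
        (union_subset hA.subset_ground hB.subset_ground) (by omega)
    rw [hA.closure] at hsub
    have hBA : B ⊆ A := subset_union_right.trans hsub
    exact hAB (flat_eq_of_subset_of_rk_le hfin hB hA hBA (by omega)).symm
  have hU : rk M (A ∪ B) = 4 := by
    have h3 := rk_mono hfin (show A ⊆ A ∪ B from subset_union_left)
    omega
  have hmp := hhm A B hA hB (by rw [hrA, hrk]) (by rw [hrB, hrk])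
  unfold SMC.ModularPair SMC.pairDefect at hmp
  have hle2 : rk M (A ∩ B) ≤ 3 := by
    have := rk_mono hfin (show A ∩ B ⊆ A from inter_subset_left)
    omega
  have hne3 : rk M (A ∩ B) ≠ 3 := by
    intro h3
    have hiA : A ∩ B = A :=
      flat_eq_of_subset_of_rk_le hfin (flat_inter hA hB) hA inter_subset_left (by omega)
    have hAB' : A ⊆ B := by rw [← hiA]; exact inter_subset_right
    exact hAB (flat_eq_of_subset_of_rk_le hfin hA hB hAB' (by omega))
  rw [hrA, hrB, hU] at hmp
  omega

lemma rk_triple (hfin : M.E.Finite) (hloopless : M.closure ∅ = ∅) {x y z : α}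
    {G H : Set α} (hG : M.IsFlat G) (hH : M.IsFlat H) (hxG : x ∈ G) (hyE : y ∈ M.E)
    (hyG : y ∉ G) (hxH : x ∈ H) (hyH : y ∈ H) (hzE : z ∈ M.E) (hzH : z ∉ H) :
    rk M (insert z (insert y {x})) = 3 := by
  have hxE : x ∈ M.E := hG.subset_ground hxG
  have h1 : rk M {x} = 1 := rk_singleton_of_loopless hfin hloopless hxE
  have h2 : rk M (insert y {x}) = 2 := by
    have hyc : y ∉ M.closure {x} := fun hy =>
      hyG ((hG.closure ▸ M.closure_subset_closure (singleton_subset_iff.mpr hxG)) hy)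
    rw [rk_insert_of_not_mem_closure hfin hyE hyc, h1]
  have hzc : z ∉ M.closure (insert y {x}) := fun hz =>
    hzH ((hH.closure ▸ M.closure_subset_closure
      (insert_subset hyH (singleton_subset_iff.mpr hxH))) hz)
  rw [rk_insert_of_not_mem_closure hfin hzE hzc, h2]

end Helpers

/-- Let M be a finite rank-4 loopless hypermodular non-modular
matroid and let F and L be disjoint flats of rank 3 and 2 respectively. Then
there are at least 3 rank-3 flats of M containing L. -/
theorem statement_10 {α : Type*} (M : Matroid α) (hfin : M.E.Finite)
    (hrk : rkM M = 4) (hloopless : M.closure ∅ = ∅) (hhm : Hypermodular M)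
    (hnonmod : ¬ Modular M)
    (F L : Set α) (hF : M.IsFlat F) (hL : M.IsFlat L)
    (hrF : rk M F = 3) (hrL : rk M L = 2) (hdisj : Disjoint F L) :
    3 ≤ {A : Set α | M.IsFlat A ∧ rk M A = 3 ∧ L ⊆ A}.ncard := by
  classical
  set PP := {A : Set α | M.IsFlat A ∧ rk M A = 3 ∧ L ⊆ A} with hPPdef
  by_contra hcon
  push_neg at hcon
  have hLE : L ⊆ M.E := hL.subset_ground
  have hFE : F ⊆ M.E := hF.subset_ground
  -- every point outside L lies on a plane through L
  have hplane : ∀ e ∈ M.E, e ∉ L →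
      M.closure (insert e L) ∈ PP ∧ e ∈ M.closure (insert e L) := by
    intro e heE heL
    have hsubE : insert e L ⊆ M.E := insert_subset heE hLE
    have hcl : e ∉ M.closure L := by rw [hL.closure]; exact heL
    have hr : rk M (M.closure (insert e L)) = 3 := by
      rw [rk_closure_eq hfin, rk_insert_of_not_mem_closure hfin heE hcl, hrL]
    have hsub := M.subset_closure _ hsubE
    exact ⟨⟨closure_flat' M _, hr, (subset_insert e L).trans hsub⟩, hsub (mem_insert e L)⟩
  -- pick a point of F and build A₁
  have hFne : F.Nonempty := by
    rw [Set.nonempty_iff_ne_empty]; rintro rfl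
    rw [rk_indep hfin M.empty_indep] at hrF; simp at hrF
  obtain ⟨a₀, ha₀F⟩ := hFne
  have ha₀L : a₀ ∉ L := fun h => (Set.disjoint_left.mp hdisj ha₀F) h
  obtain ⟨hA₁P, ha₀A₁⟩ := hplane a₀ (hFE ha₀F) ha₀L
  set A₁ := M.closure (insert a₀ L) with hA₁def
  obtain ⟨hA₁flat, hA₁rk, hLA₁⟩ := hA₁P
  -- a point p of L
  have hLne : L.Nonempty := by
    rw [Set.nonempty_iff_ne_empty]; rintro rfl
    rw [rk_indep hfin M.empty_indep] at hrL; simp at hrL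
  obtain ⟨p, hpL⟩ := hLne
  have hpE : p ∈ M.E := hLE hpL
  have hpF : p ∉ F := fun h => (Set.disjoint_left.mp hdisj h) hpL
  have hFA₁ : F ≠ A₁ := fun h => hpF (h ▸ hLA₁ hpL)
  set ℓ₁ := F ∩ A₁ with hℓ₁def
  have hℓ₁rk : rk M ℓ₁ = 2 := plane_inter hfin hrk hhm hF hA₁flat hrF hA₁rk hFA₁
  have hℓ₁flat : M.IsFlat ℓ₁ := flat_inter hF hA₁flat
  -- a point of F off ℓ₁, and the plane A₂
  have hFnotsub : ¬ F ⊆ ℓ₁ := by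
    intro h
    have := rk_mono hfin h
    omega
  obtain ⟨b₀, hb₀F, hb₀ℓ₁⟩ := Set.not_subset.mp hFnotsub
  have hb₀L : b₀ ∉ L := fun h => (Set.disjoint_left.mp hdisj hb₀F) h
  obtain ⟨hA₂P, hb₀A₂⟩ := hplane b₀ (hFE hb₀F) hb₀L
  set A₂ := M.closure (insert b₀ L) with hA₂def
  obtain ⟨hA₂flat, hA₂rk, hLA₂⟩ := hA₂P
  have hb₀A₁ : b₀ ∉ A₁ := fun h => hb₀ℓ₁ ⟨hb₀F, h⟩
  have hA₁A₂ : A₁ ≠ A₂ := fun h => hb₀A₁ (h ▸ hb₀A₂)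
  have hFA₂ : F ≠ A₂ := fun h => hpF (h ▸ hLA₂ hpL)
  set ℓ₂ := F ∩ A₂ with hℓ₂def
  have hℓ₂rk : rk M ℓ₂ = 2 := plane_inter hfin hrk hhm hF hA₂flat hrF hA₂rk hFA₂
  have hℓ₂flat : M.IsFlat ℓ₂ := flat_inter hF hA₂flat
  -- PP = {A₁, A₂}
  have hPPfin : PP.Finite :=
    hfin.finite_subsets.subset (fun A hA => hA.1.subset_ground)
  have hpairsub : ({A₁, A₂} : Set (Set α)) ⊆ PP := by
    rintro A (rfl | rfl)
    · exact ⟨hA₁flat, hA₁rk, hLA₁⟩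
    · exact ⟨hA₂flat, hA₂rk, hLA₂⟩
  have hPPeq : PP = {A₁, A₂} := by
    refine (Set.eq_of_subset_of_ncard_le hpairsub ?_ hPPfin).symm
    rw [Set.ncard_pair hA₁A₂]
    omega
  -- the two planes cover the ground set
  have hcover : ∀ x ∈ M.E, x ∈ A₁ ∨ x ∈ A₂ := by
    intro x hxE
    by_cases hxL : x ∈ L
    · exact Or.inl (hLA₁ hxL)
    obtain ⟨hQP, hxQ⟩ := hplane x hxE hxL
    rw [hPPeq] at hQP
    rcases hQP with h | h
    · exact Or.inl (h ▸ hxQ)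
    · exact Or.inr (h ▸ hxQ)
  -- A₁ ∩ A₂ = L, hence ℓ₁ and ℓ₂ are disjoint
  have hA₁₂L : A₁ ∩ A₂ = L := by
    have hrk12 : rk M (A₁ ∩ A₂) = 2 :=
      plane_inter hfin hrk hhm hA₁flat hA₂flat hA₁rk hA₂rk hA₁A₂
    have hLsub : L ⊆ A₁ ∩ A₂ := subset_inter hLA₁ hLA₂
    exact (flat_eq_of_subset_of_rk_le hfin hL (flat_inter hA₁flat hA₂flat) hLsub
      (by omega)).symm
  have hℓdisj : ∀ x, x ∈ ℓ₁ → x ∉ ℓ₂ := by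
    intro x hx1 hx2
    have hxL : x ∈ L := hA₁₂L ▸ (⟨hx1.2, hx2.2⟩ : x ∈ A₁ ∩ A₂)
    exact (Set.disjoint_left.mp hdisj hx1.1) hxL
  -- pick two independent points on each of ℓ₁, ℓ₂
  obtain ⟨a₁, a₂, ha₁ℓ, ha₂ℓ, haind, hane⟩ := exists_indep_pair_of_rk_two hfin hℓ₁rk
  obtain ⟨b₁, b₂, hb₁ℓ, hb₂ℓ, hbind, hbne⟩ := exists_indep_pair_of_rk_two hfin hℓ₂rk
  have ha₁F : a₁ ∈ F := ha₁ℓ.1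
  have ha₂F : a₂ ∈ F := ha₂ℓ.1
  have hb₁F : b₁ ∈ F := hb₁ℓ.1
  have hb₂F : b₂ ∈ F := hb₂ℓ.1
  have ha₁A₁ : a₁ ∈ A₁ := ha₁ℓ.2
  have ha₂A₁ : a₂ ∈ A₁ := ha₂ℓ.2
  have hb₁A₂ : b₁ ∈ A₂ := hb₁ℓ.2
  have hb₂A₂ : b₂ ∈ A₂ := hb₂ℓ.2
  have ha₁E : a₁ ∈ M.E := hFE ha₁F
  have ha₂E : a₂ ∈ M.E := hFE ha₂F
  have hb₁E : b₁ ∈ M.E := hFE hb₁F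
  have hb₂E : b₂ ∈ M.E := hFE hb₂F
  have hb₁A₁ : b₁ ∉ A₁ := fun h => hℓdisj b₁ ⟨hb₁F, h⟩ hb₁ℓ
  have hb₂A₁ : b₂ ∉ A₁ := fun h => hℓdisj b₂ ⟨hb₂F, h⟩ hb₂ℓ
  have ha₁A₂ : a₁ ∉ A₂ := fun h => hℓdisj a₁ ha₁ℓ ⟨ha₁F, h⟩
  have ha₂A₂ : a₂ ∉ A₂ := fun h => hℓdisj a₂ ha₂ℓ ⟨ha₂F, h⟩
  have hpℓ₁ : p ∉ ℓ₁ := fun h => hpF h.1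
  have hpℓ₂ : p ∉ ℓ₂ := fun h => hpF h.1
  -- rank-3 triples
  have hta : rk M (insert p (insert a₂ {a₁})) = 3 := by
    have hpair : rk M {a₁, a₂} = 2 := by
      rw [rk_indep hfin haind, Set.ncard_pair hane]
    have ha₂cl : a₂ ∉ M.closure {a₁} := by
      intro h
      have hsub : ({a₁, a₂} : Set α) ⊆ M.closure {a₁} :=
        insert_subset (M.mem_closure_of_mem rfl (by simpa using ha₁E)) (by simpa using h)
      have := rk_le_of_subset_closure hfin hsub
      rw [hpair, rk_singleton_of_loopless hfin hloopless ha₁E] at this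
      omega
    exact rk_triple hfin hloopless (closure_flat' M {a₁}) hℓ₁flat
      (M.mem_closure_of_mem rfl (by simpa using ha₁E)) ha₂E ha₂cl ha₁ℓ ha₂ℓ hpE hpℓ₁
  have htb : rk M (insert p (insert b₂ {b₁})) = 3 := by
    have hpair : rk M {b₁, b₂} = 2 := by
      rw [rk_indep hfin hbind, Set.ncard_pair hbne]
    have hb₂cl : b₂ ∉ M.closure {b₁} := by
      intro h
      have hsub : ({b₁, b₂} : Set α) ⊆ M.closure {b₁} :=
        insert_subset (M.mem_closure_of_mem rfl (by simpa using hb₁E)) (by simpa using h)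
      have := rk_le_of_subset_closure hfin hsub
      rw [hpair, rk_singleton_of_loopless hfin hloopless hb₁E] at this
      omega
    exact rk_triple hfin hloopless (closure_flat' M {b₁}) hℓ₂flat
      (M.mem_closure_of_mem rfl (by simpa using hb₁E)) hb₂E hb₂cl hb₁ℓ hb₂ℓ hpE hpℓ₂
  have hs₁ : rk M (insert p (insert b₁ {a₁})) = 3 :=
    rk_triple hfin hloopless hℓ₁flat hF ha₁ℓ hb₁E (fun h => hℓdisj b₁ h hb₁ℓ)
      ha₁F hb₁F hpE hpF
  have hs₂ : rk M (insert p (insert b₂ {a₂})) = 3 :=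
    rk_triple hfin hloopless hℓ₁flat hF ha₂ℓ hb₂E (fun h => hℓdisj b₂ h hb₂ℓ)
      ha₂F hb₂F hpE hpF
  -- ranks of the joining lines
  have hpnotclF : ∀ x ∈ F, p ∉ M.closure {x} := by
    intro x hxF h
    exact hpF ((hF.closure ▸ M.closure_subset_closure (singleton_subset_iff.mpr hxF)) h)
  have hpa₁rk : rk M (insert p {a₁}) = 2 := by
    rw [rk_insert_of_not_mem_closure hfin hpE (hpnotclF a₁ ha₁F),
      rk_singleton_of_loopless hfin hloopless ha₁E]
  have hpa₂rk : rk M (insert p {a₂}) = 2 := by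
    rw [rk_insert_of_not_mem_closure hfin hpE (hpnotclF a₂ ha₂F),
      rk_singleton_of_loopless hfin hloopless ha₂E]
  have hpb₁rk : rk M (insert p {b₁}) = 2 := by
    rw [rk_insert_of_not_mem_closure hfin hpE (hpnotclF b₁ hb₁F),
      rk_singleton_of_loopless hfin hloopless hb₁E]
  have hpb₂rk : rk M (insert p {b₂}) = 2 := by
    rw [rk_insert_of_not_mem_closure hfin hpE (hpnotclF b₂ hb₂F),
      rk_singleton_of_loopless hfin hloopless hb₂E]
  -- the planes P₁ and P₂
  set P₁ := M.closure (insert p (insert b₁ {a₁})) with hP₁def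
  set P₂ := M.closure (insert p (insert b₂ {a₂})) with hP₂def
  have hs₁E : insert p (insert b₁ {a₁}) ⊆ M.E :=
    insert_subset hpE (insert_subset hb₁E (by simpa using ha₁E))
  have hs₂E : insert p (insert b₂ {a₂}) ⊆ M.E :=
    insert_subset hpE (insert_subset hb₂E (by simpa using ha₂E))
  have hP₁flat : M.IsFlat P₁ := closure_flat' M _
  have hP₂flat : M.IsFlat P₂ := closure_flat' M _
  have hP₁rk : rk M P₁ = 3 := by rw [hP₁def, rk_closure_eq hfin, hs₁]
  have hP₂rk : rk M P₂ = 3 := by rw [hP₂def, rk_closure_eq hfin, hs₂]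
  have hpP₁ : p ∈ P₁ := M.subset_closure _ hs₁E (by simp)
  have hpP₂ : p ∈ P₂ := M.subset_closure _ hs₂E (by simp)
  have ha₁P₁ : a₁ ∈ P₁ := M.subset_closure _ hs₁E (by simp)
  have ha₂P₂ : a₂ ∈ P₂ := M.subset_closure _ hs₂E (by simp)
  have hb₁P₁ : b₁ ∈ P₁ := M.subset_closure _ hs₁E (by simp)
  have hb₂P₂ : b₂ ∈ P₂ := M.subset_closure _ hs₂E (by simp)
  have hP₁A₁ : P₁ ≠ A₁ := fun h => hb₁A₁ (h ▸ hb₁P₁)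
  have hP₁A₂ : P₁ ≠ A₂ := fun h => ha₁A₂ (h ▸ ha₁P₁)
  have hP₂A₁ : P₂ ≠ A₁ := fun h => hb₂A₁ (h ▸ hb₂P₂)
  have hP₂A₂ : P₂ ≠ A₂ := fun h => ha₂A₂ (h ▸ ha₂P₂)
  -- intersections of P's with A's are contained in joining lines
  have hP₁A₁sub : P₁ ∩ A₁ ⊆ M.closure (insert p {a₁}) := by
    have hrPA : rk M (P₁ ∩ A₁) = 2 :=
      plane_inter hfin hrk hhm hP₁flat hA₁flat hP₁rk hA₁rk hP₁A₁
    exact subset_closure_of_rk_le hfin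
      (insert_subset ⟨hpP₁, hLA₁ hpL⟩ (singleton_subset_iff.mpr ⟨ha₁P₁, ha₁A₁⟩))
      (inter_subset_right.trans hA₁flat.subset_ground) (by omega)
  have hP₂A₁sub : P₂ ∩ A₁ ⊆ M.closure (insert p {a₂}) := by
    have hrPA : rk M (P₂ ∩ A₁) = 2 :=
      plane_inter hfin hrk hhm hP₂flat hA₁flat hP₂rk hA₁rk hP₂A₁
    exact subset_closure_of_rk_le hfin
      (insert_subset ⟨hpP₂, hLA₁ hpL⟩ (singleton_subset_iff.mpr ⟨ha₂P₂, ha₂A₁⟩))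
      (inter_subset_right.trans hA₁flat.subset_ground) (by omega)
  have hP₁A₂sub : P₁ ∩ A₂ ⊆ M.closure (insert p {b₁}) := by
    have hrPA : rk M (P₁ ∩ A₂) = 2 :=
      plane_inter hfin hrk hhm hP₁flat hA₂flat hP₁rk hA₂rk hP₁A₂
    exact subset_closure_of_rk_le hfin
      (insert_subset ⟨hpP₁, hLA₂ hpL⟩ (singleton_subset_iff.mpr ⟨hb₁P₁, hb₁A₂⟩))
      (inter_subset_right.trans hA₂flat.subset_ground) (by omega)
  have hP₂A₂sub : P₂ ∩ A₂ ⊆ M.closure (insert p {b₂}) := by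
    have hrPA : rk M (P₂ ∩ A₂) = 2 :=
      plane_inter hfin hrk hhm hP₂flat hA₂flat hP₂rk hA₂rk hP₂A₂
    exact subset_closure_of_rk_le hfin
      (insert_subset ⟨hpP₂, hLA₂ hpL⟩ (singleton_subset_iff.mpr ⟨hb₂P₂, hb₂A₂⟩))
      (inter_subset_right.trans hA₂flat.subset_ground) (by omega)
  -- P₁ ≠ P₂
  have hpa₁E : insert p ({a₁} : Set α) ⊆ M.E := insert_subset hpE (by simpa using ha₁E)
  have hpa₂E : insert p ({a₂} : Set α) ⊆ M.E := insert_subset hpE (by simpa using ha₂E)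
  have hpb₁E : insert p ({b₁} : Set α) ⊆ M.E := insert_subset hpE (by simpa using hb₁E)
  have hpb₂E : insert p ({b₂} : Set α) ⊆ M.E := insert_subset hpE (by simpa using hb₂E)
  have hP₁P₂ : P₁ ≠ P₂ := by
    intro h
    have ha₂P₁ : a₂ ∈ P₁ := h ▸ ha₂P₂
    have ha₂cl : a₂ ∈ M.closure (insert p {a₁}) := hP₁A₁sub ⟨ha₂P₁, ha₂A₁⟩
    have ht : insert p (insert a₂ {a₁}) ⊆ M.closure (insert p {a₁}) :=
      insert_subset (M.mem_closure_of_mem (mem_insert p _) hpa₁E)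
        (insert_subset ha₂cl (singleton_subset_iff.mpr
          (M.mem_closure_of_mem (by simp) hpa₁E)))
    have hh := rk_le_of_subset_closure hfin ht
    rw [hta, hpa₁rk] at hh
    omega
  -- bounds on the intersections of the joining lines
  have hWa : rk M (M.closure (insert p {a₁}) ∩ M.closure (insert p {a₂})) ≤ 1 := by
    set W := M.closure (insert p {a₁}) ∩ M.closure (insert p {a₂}) with hWdef
    have hWflat : M.IsFlat W := flat_inter (closure_flat' M _) (closure_flat' M _)
    have hle : rk M W ≤ 2 := by
      have h1 := rk_mono hfin (show W ⊆ M.closure (insert p {a₁}) from inter_subset_left)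
      rw [rk_closure_eq hfin, hpa₁rk] at h1
      omega
    by_contra hgt
    have hW2 : rk M W = 2 := by omega
    have hsub : M.closure (insert p {a₁}) ⊆ M.closure W :=
      subset_closure_of_rk_le hfin inter_subset_left (M.closure_subset_ground _)
        (by rw [hW2, rk_closure_eq hfin, hpa₁rk])
    rw [hWflat.closure] at hsub
    have ha₁W : a₁ ∈ W := hsub (M.mem_closure_of_mem (by simp) hpa₁E)
    have ha₁cl : a₁ ∈ M.closure (insert p {a₂}) := ha₁W.2
    have ht : insert p (insert a₂ {a₁}) ⊆ M.closure (insert p {a₂}) :=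
      insert_subset (M.mem_closure_of_mem (mem_insert p _) hpa₂E)
        (insert_subset (M.mem_closure_of_mem (by simp) hpa₂E)
          (singleton_subset_iff.mpr ha₁cl))
    have hh := rk_le_of_subset_closure hfin ht
    rw [hta, hpa₂rk] at hh
    omega
  have hWb : rk M (M.closure (insert p {b₁}) ∩ M.closure (insert p {b₂})) ≤ 1 := by
    set W := M.closure (insert p {b₁}) ∩ M.closure (insert p {b₂}) with hWdef
    have hWflat : M.IsFlat W := flat_inter (closure_flat' M _) (closure_flat' M _)
    have hle : rk M W ≤ 2 := by
      have h1 := rk_mono hfin (show W ⊆ M.closure (insert p {b₁}) from inter_subset_left)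
      rw [rk_closure_eq hfin, hpb₁rk] at h1
      omega
    by_contra hgt
    have hW2 : rk M W = 2 := by omega
    have hsub : M.closure (insert p {b₁}) ⊆ M.closure W :=
      subset_closure_of_rk_le hfin inter_subset_left (M.closure_subset_ground _)
        (by rw [hW2, rk_closure_eq hfin, hpb₁rk])
    rw [hWflat.closure] at hsub
    have hb₁W : b₁ ∈ W := hsub (M.mem_closure_of_mem (by simp) hpb₁E)
    have hb₁cl : b₁ ∈ M.closure (insert p {b₂}) := hb₁W.2
    have ht : insert p (insert b₂ {b₁}) ⊆ M.closure (insert p {b₂}) :=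
      insert_subset (M.mem_closure_of_mem (mem_insert p _) hpb₂E)
        (insert_subset (M.mem_closure_of_mem (by simp) hpb₂E)
          (singleton_subset_iff.mpr hb₁cl))
    have hh := rk_le_of_subset_closure hfin ht
    rw [htb, hpb₂rk] at hh
    omega
  -- the line g = P₁ ∩ P₂ collapses to the point p : contradiction
  have hgrk : rk M (P₁ ∩ P₂) = 2 :=
    plane_inter hfin hrk hhm hP₁flat hP₂flat hP₁rk hP₂rk hP₁P₂
  have hprk : rk M ({p} : Set α) = 1 := rk_singleton_of_loopless hfin hloopless hpE
  have hgA₁ : P₁ ∩ P₂ ∩ A₁ ⊆ M.closure {p} := by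
    have hsub : P₁ ∩ P₂ ∩ A₁ ⊆
        M.closure (insert p {a₁}) ∩ M.closure (insert p {a₂}) := fun x hx =>
      ⟨hP₁A₁sub ⟨hx.1.1, hx.2⟩, hP₂A₁sub ⟨hx.1.2, hx.2⟩⟩
    have hle : rk M (P₁ ∩ P₂ ∩ A₁) ≤ 1 := (rk_mono hfin hsub).trans hWa
    exact subset_closure_of_rk_le hfin
      (singleton_subset_iff.mpr ⟨⟨hpP₁, hpP₂⟩, hLA₁ hpL⟩)
      (inter_subset_right.trans hA₁flat.subset_ground) (by omega)
  have hgA₂ : P₁ ∩ P₂ ∩ A₂ ⊆ M.closure {p} := by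
    have hsub : P₁ ∩ P₂ ∩ A₂ ⊆
        M.closure (insert p {b₁}) ∩ M.closure (insert p {b₂}) := fun x hx =>
      ⟨hP₁A₂sub ⟨hx.1.1, hx.2⟩, hP₂A₂sub ⟨hx.1.2, hx.2⟩⟩
    have hle : rk M (P₁ ∩ P₂ ∩ A₂) ≤ 1 := (rk_mono hfin hsub).trans hWb
    exact subset_closure_of_rk_le hfin
      (singleton_subset_iff.mpr ⟨⟨hpP₁, hpP₂⟩, hLA₂ hpL⟩)
      (inter_subset_right.trans hA₂flat.subset_ground) (by omega)
  have hgsub : P₁ ∩ P₂ ⊆ M.closure {p} := by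
    intro x hx
    have hxE : x ∈ M.E := hP₁flat.subset_ground hx.1
    rcases hcover x hxE with h | h
    · exact hgA₁ ⟨hx, h⟩
    · exact hgA₂ ⟨hx, h⟩
  have hfinal := rk_le_of_subset_closure hfin hgsub
  rw [hgrk, hprk] at hfinal
  omega

end SMC
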